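/- arXiv:2604.24134 — 4 statements merged into one kernel-verified Lean document; each statement's English description precedes it below -/
import Mathlib

section
/- For every positive integer m there exists a rooted tree with exactly m leaves, labeled 1 through m, such that (1) the i-th leaf has depth at most C·α(i) + C for an absolute constant C, where α(i) := min{k ≥ 1 : 3 ↑^k 2 > i}, and (2) every node on the root-to-leaf path of the i-th leaf has at most max(i, 9) children. -/
/-- Knuth's up-arrow notation. -/
def uparrow (a : ℕ) : ℕ → ℕ → ℕ
  | 0, _ => 0
  | 1, b => a ^ b
  | _+2, 0 => 0
  | _+2, 1 => a
  | k+2, b+2 => uparrow a (k+1) (uparrow a (k+2) (b+1))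
  termination_by k b => (k, b)

/-- `α(i) := min {k ≥ 1 : 3 ↑^k 2 > i}`. -/
noncomputable def alphaFn (m : ℕ) : ℕ := sInf {k : ℕ | 1 ≤ k ∧ m < uparrow 3 k 2}

/-- A finite rooted tree: nodes are `Fin n`, with a root, a parent function, and a
depth function (distance to the root) certifying the tree structure. -/
structure IndexTree where
  n : ℕ
  npos : 0 < n
  root : Fin n
  parent : Fin n → Fin n
  depth : Fin n → ℕ
  parent_root : parent root = root
  depth_root : depth root = 0
  depth_parent : ∀ v, v ≠ root → depth v = depth (parent v) + 1

/-- A node is a leaf if it has no children. -/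
def IndexTree.IsLeaf (T : IndexTree) (v : Fin T.n) : Prop :=
  ∀ u, T.parent u = v → u = v

/-- The number of children of a node. -/
def IndexTree.numChildren (T : IndexTree) (v : Fin T.n) : ℕ :=
  (Finset.univ.filter (fun u => T.parent u = v ∧ u ≠ v)).card

/-- `v` lies on the root-to-`u` path, i.e. `v` is an ancestor of `u` (or `u` itself). -/
def IndexTree.OnRootPath (T : IndexTree) (v u : Fin T.n) : Prop :=
  ∃ t : ℕ, T.parent^[t] u = v

namespace WIT

lemma u_one (b : ℕ) : uparrow 3 1 b = 3 ^ b := by simp [uparrow]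
lemma u_k2_one (k : ℕ) : uparrow 3 (k+2) 1 = 3 := by simp [uparrow]
lemma u_k2_b2 (k b : ℕ) : uparrow 3 (k+2) (b+2) = uparrow 3 (k+1) (uparrow 3 (k+2) (b+1)) := by
  rw [uparrow]

/-- U1 -/
lemma u_ge (k : ℕ) : ∀ b, 1 ≤ k → 1 ≤ b → b + 2 ≤ uparrow 3 k b := by
  induction k using Nat.twoStepInduction with
  | zero => intro b h _; omega
  | one =>
    intro b _ hb
    rw [u_one]
    induction b with
    | zero => omega
    | succ b ih =>
      rcases Nat.eq_zero_or_pos b with hb0 | hb0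
      · subst hb0; norm_num
      · have := ih (by omega)
        rw [pow_succ]; omega
  | more k ih ih1 =>
    intro b _ hb
    induction b with
    | zero => omega
    | succ b ihb =>
      rcases Nat.eq_zero_or_pos b with hb0 | hb0
      · subst hb0; rw [u_k2_one]
      · obtain ⟨b', rfl⟩ : ∃ b', b = b' + 1 := ⟨b - 1, by omega⟩
        rw [u_k2_b2]
        have h1 : b' + 1 + 2 ≤ uparrow 3 (k+2) (b'+1) := ihb (by omega)
        have h2 := ih1 (uparrow 3 (k+2) (b'+1)) (by omega) (by omega)
        omega

/-- successor strict mono in b -/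
lemma u_succ_lt (k b : ℕ) (hk : 1 ≤ k) (hb : 1 ≤ b) :
    uparrow 3 k b + 1 ≤ uparrow 3 k (b+1) := by
  rcases k with _ | _ | k
  · omega
  · rw [u_one, u_one, pow_succ]
    have : 1 ≤ 3 ^ b := Nat.one_le_pow _ _ (by norm_num)
    omega
  · obtain ⟨b', rfl⟩ : ∃ b', b = b' + 1 := ⟨b - 1, by omega⟩
    show uparrow 3 (k+2) (b'+1) + 1 ≤ uparrow 3 (k+2) (b'+1+1)
    have hrw : uparrow 3 (k+2) (b'+1+1) = uparrow 3 (k+1) (uparrow 3 (k+2) (b'+1)) := u_k2_b2 k b'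
    rw [hrw]
    have h1 : (b'+1) + 2 ≤ uparrow 3 (k+2) (b'+1) := u_ge _ _ (by omega) (by omega)
    have h2 := u_ge (k+1) (uparrow 3 (k+2) (b'+1)) (by omega) (by omega)
    omega

lemma u_mono (k : ℕ) {b b' : ℕ} (hk : 1 ≤ k) (hb : 1 ≤ b) (hbb : b ≤ b') :
    uparrow 3 k b ≤ uparrow 3 k b' := by
  induction b' with
  | zero => omega
  | succ b' ih =>
    rcases Nat.lt_or_ge b (b'+1) with h | h
    · have : b ≤ b' := by omega
      have := ih this
      have := u_succ_lt k b' hk (by omega)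
      omega
    · have : b = b' + 1 := by omega
      subst this; rfl

lemma u_k2_ge9 (k : ℕ) (hk : 1 ≤ k) : k + 8 ≤ uparrow 3 k 2 := by
  induction k with
  | zero => omega
  | succ k ih =>
    rcases Nat.eq_zero_or_pos k with h | h
    · subst h; rw [u_one]; norm_num
    · have h1 := ih h
      have h2 : uparrow 3 (k+1) 2 = uparrow 3 k 3 := by
        obtain ⟨k', rfl⟩ : ∃ k', k = k' + 1 := ⟨k - 1, by omega⟩
        rw [u_k2_b2, u_k2_one]
      have h3 : uparrow 3 k 2 + 1 ≤ uparrow 3 k 3 := u_succ_lt k 2 h (by omega)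
      omega

lemma alpha_set_nonempty (i : ℕ) : {k : ℕ | 1 ≤ k ∧ i < uparrow 3 k 2}.Nonempty := by
  refine ⟨i + 1, by omega, ?_⟩
  have := u_k2_ge9 (i+1) (by omega)
  omega

lemma alpha_mem (i : ℕ) : 1 ≤ alphaFn i ∧ i < uparrow 3 (alphaFn i) 2 :=
  Nat.sInf_mem (alpha_set_nonempty i)

lemma alpha_ge2 {i : ℕ} (hi : 9 ≤ i) : 2 ≤ alphaFn i := by
  have h := alpha_mem i
  rcases Nat.lt_or_ge (alphaFn i) 2 with h2 | h2
  · exfalso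
    have : alphaFn i = 1 := by omega
    rw [this, u_one] at h
    norm_num at h; omega
  · exact h2

lemma alpha_lower {i : ℕ} (hi : 9 ≤ i) : uparrow 3 (alphaFn i - 1) 2 ≤ i := by
  have h2 := alpha_ge2 hi
  by_contra hcon
  push_neg at hcon
  have hmem : (alphaFn i - 1) ∈ {k : ℕ | 1 ≤ k ∧ i < uparrow 3 k 2} := ⟨by omega, hcon⟩
  have h3 : alphaFn i ≤ alphaFn i - 1 := Nat.sInf_le hmem
  omega



def h : ℕ → ℕ → ℕ
  | 0, b => b + 1
  | d+1, b => (h d)^[b] b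

def idx (d : ℕ) : ℕ → ℕ → ℕ → ℕ
  | 0, _, _ => 0
  | c+1, b, i => if i < h d b then 0 else idx d c (h d b) i + 1

def sub (d : ℕ) : ℕ → ℕ → ℕ → ℕ
  | 0, b, _ => b
  | c+1, b, i => if i < h d b then b else sub d c (h d b) i

def enc : ℕ → ℕ → ℕ → List ℕ
  | 0, _, _ => []
  | d+1, b, i => idx d b b i :: enc d (sub d b b i) i

def pbase : ℕ → ℕ → List ℕ → ℕ
  | _, b, [] => b
  | 0, b, _ :: _ => b
  | d+1, b, _j :: q => pbase d ((h d)^[_j] b) q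

lemma h_succ (d b : ℕ) : h (d+1) b = (h d)^[b] b := rfl

lemma h_lt : ∀ d b, 1 ≤ b → b < h d b := by
  intro d
  induction d with
  | zero => intro b hb; simp [h]
  | succ d ih =>
    have aux : ∀ c x, 1 ≤ x → x + c ≤ (h d)^[c] x := by
      intro c
      induction c with
      | zero => simp
      | succ c ihc =>
        intro x hx
        rw [Function.iterate_succ_apply]
        have h1 := ih x hx
        have h2 := ihc (h d x) (by omega)
        omega
    intro b hb
    rw [h_succ]
    have := aux b b hb
    omega

lemma h_pos (d b : ℕ) (hb : 1 ≤ b) : 1 ≤ h d b := by have := h_lt d b hb; omega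

lemma h_iter_lower (d : ℕ) : ∀ c x, 1 ≤ x → x + c ≤ (h d)^[c] x := by
  intro c
  induction c with
  | zero => simp
  | succ c ihc =>
    intro x hx
    rw [Function.iterate_succ_apply]
    have h1 := h_lt d x hx
    have h2 := ihc (h d x) (by omega)
    omega

lemma iter_mono {f : ℕ → ℕ} (hmono : ∀ x y, 1 ≤ x → x ≤ y → f x ≤ f y)
    (hpos : ∀ x, 1 ≤ x → 1 ≤ f x) :
    ∀ c x y, 1 ≤ x → x ≤ y → f^[c] x ≤ f^[c] y ∧ 1 ≤ f^[c] x := by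
  intro c
  induction c with
  | zero => intro x y hx hxy; simpa using ⟨hxy, hx⟩
  | succ c ihc =>
    intro x y hx hxy
    rw [Function.iterate_succ_apply', Function.iterate_succ_apply']
    obtain ⟨h1, h2⟩ := ihc x y hx hxy
    exact ⟨hmono _ _ h2 h1, hpos _ h2⟩

lemma h_mono : ∀ d b b', 1 ≤ b → b ≤ b' → h d b ≤ h d b' := by
  intro d
  induction d with
  | zero => intro b b' _ hbb; simp [h]; omega
  | succ d ih =>
    intro b b' hb hbb
    rw [h_succ, h_succ]
    have step1 : (h d)^[b] b ≤ (h d)^[b] b' :=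
      (iter_mono (fun x y hx hxy => ih x y hx hxy) (fun x hx => h_pos d x hx) b b b' hb hbb).1
    have hb' : 1 ≤ b' := by omega
    have step2 : (h d)^[b] b' ≤ (h d)^[b'] b' := by
      obtain ⟨e, rfl⟩ : ∃ e, b' = e + b := ⟨b' - b, by omega⟩
      rw [Function.iterate_add_apply]
      have h1 : 1 ≤ (h d)^[b] (e + b) :=
        (iter_mono (fun x y hx hxy => ih x y hx hxy) (fun x hx => h_pos d x hx) b (e+b) (e+b) (by omega) le_rfl).2
      have := h_iter_lower d e ((h d)^[b] (e+b)) h1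
      omega
    omega

lemma spec (d : ℕ) : ∀ c b i, 1 ≤ b → b ≤ i → i < (h d)^[c] b →
    idx d c b i < c ∧ sub d c b i = (h d)^[idx d c b i] b ∧ b ≤ sub d c b i ∧
      sub d c b i ≤ i ∧ i < h d (sub d c b i) := by
  intro c
  induction c with
  | zero => intro b i hb hbi hiter; simp at hiter; omega
  | succ c ihc =>
    intro b i hb hbi hiter
    by_cases hcase : i < h d b
    · have hidx : idx d (c+1) b i = 0 := by simp [idx, hcase]
      have hsub : sub d (c+1) b i = b := by simp [sub, hcase]
      rw [hidx, hsub]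
      exact ⟨by omega, by simp, le_rfl, hbi, hcase⟩
    · push_neg at hcase
      rw [Function.iterate_succ_apply] at hiter
      have h1 := h_pos d b hb
      obtain ⟨ha, hb2, hc2, hd2, he2⟩ := ihc (h d b) i h1 hcase hiter
      have hidx : idx d (c+1) b i = idx d c (h d b) i + 1 := by
        simp [idx, hcase, Nat.not_lt_of_ge hcase]
      have hsub : sub d (c+1) b i = sub d c (h d b) i := by
        simp [sub, Nat.not_lt_of_ge hcase]
      refine ⟨by omega, ?_, ?_, by omega, by rwa [hsub]⟩
      · rw [hsub, hidx, hb2, Function.iterate_succ_apply]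
      · rw [hsub]
        have := h_lt d b hb
        omega

lemma enc_length : ∀ d b i, (enc d b i).length = d := by
  intro d
  induction d with
  | zero => intro b i; rfl
  | succ d ih => intro b i; simp [enc, ih]

lemma enc_inj : ∀ d b i i', 1 ≤ b → b ≤ i → i < h d b → b ≤ i' → i' < h d b →
    enc d b i = enc d b i' → i = i' := by
  intro d
  induction d with
  | zero => intro b i i' hb hbi hih hbi' hih'; simp [h] at hih hih'; omega
  | succ d ih =>
    intro b i i' hb hbi hih hbi' hih' heq
    rw [h_succ] at hih hih'
    simp only [enc, List.cons.injEq] at heq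
    obtain ⟨hhead, htail⟩ := heq
    obtain ⟨_, hsub, hble, hsle, hslt⟩ := spec d b b i hb hbi hih
    obtain ⟨_, hsub', hble', hsle', hslt'⟩ := spec d b b i' hb hbi' hih'
    have hsubeq : sub d b b i = sub d b b i' := by rw [hsub, hsub', hhead]
    rw [hsubeq] at htail hsle hslt
    exact ih _ i i' (le_trans hb hble') hsle hslt hsle' hslt' htail

lemma enc_min : ∀ d b i q, 1 ≤ b → b ≤ i → i < h d b → q <+: enc d b i →
    pbase d b q ≤ i := by
  intro d
  induction d with
  | zero =>
    intro b i q hb hbi _ hpre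
    have : q = [] := List.prefix_nil.mp (by simpa [enc] using hpre)
    subst this; exact hbi
  | succ d ih =>
    intro b i q hb hbi hih hpre
    rw [h_succ] at hih
    rcases q with _ | ⟨j, q'⟩
    · exact hbi
    · rw [show enc (d+1) b i = idx d b b i :: enc d (sub d b b i) i from rfl] at hpre
      rw [List.cons_prefix_cons] at hpre
      obtain ⟨rfl, hpre'⟩ := hpre
      obtain ⟨_, hsub, hble, hsle, hslt⟩ := spec d b b i hb hbi hih
      show pbase d ((h d)^[idx d b b i] b) q' ≤ i
      rw [← hsub]
      exact ih _ i q' (le_trans hb hble) hsle hslt hpre'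

lemma enc_child : ∀ d b i q c, 1 ≤ b → b ≤ i → i < h d b → q ++ [c] <+: enc d b i →
    c < pbase d b q := by
  intro d
  induction d with
  | zero =>
    intro b i q c _ _ _ hpre
    exfalso
    have : q ++ [c] = [] := List.prefix_nil.mp (by simpa [enc] using hpre)
    simpa using congrArg List.length this
  | succ d ih =>
    intro b i q c hb hbi hih hpre
    rw [h_succ] at hih
    rw [show enc (d+1) b i = idx d b b i :: enc d (sub d b b i) i from rfl] at hpre
    rcases q with _ | ⟨j, q'⟩
    · simp only [List.nil_append, List.cons_prefix_cons] at hpre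
      obtain ⟨rfl, _⟩ := hpre
      obtain ⟨hlt, _, _, _, _⟩ := spec d b b i hb hbi hih
      exact hlt
    · rw [List.cons_append, List.cons_prefix_cons] at hpre
      obtain ⟨rfl, hpre'⟩ := hpre
      obtain ⟨_, hsub, hble, hsle, hslt⟩ := spec d b b i hb hbi hih
      show c < pbase d ((h d)^[idx d b b i] b) q'
      rw [← hsub]
      exact ih _ i q' c (le_trans hb hble) hsle hslt hpre'


-- continuing namespace WIT, assumes t2+t3 content
lemma h0_iter : ∀ c b, (h 0)^[c] b = b + c := by
  intro c
  induction c with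
  | zero => simp
  | succ c ih => intro b; rw [Function.iterate_succ_apply, ih]; simp [h]; omega

lemma h1_eq (b : ℕ) : h 1 b = 2 * b := by rw [h_succ, h0_iter]; omega

lemma h1_iter : ∀ c b, (h 1)^[c] b = 2^c * b := by
  intro c
  induction c with
  | zero => simp
  | succ c ih => intro b; rw [Function.iterate_succ_apply, ih, h1_eq, pow_succ]; ring

lemma h2_eq (b : ℕ) : h 2 b = 2^b * b := by rw [h_succ, h1_iter]

lemma dominate {f g : ℕ → ℕ} (hg : ∀ x y, 2 ≤ x → x ≤ y → g x ≤ g y)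
    (hfg : ∀ x, 2 ≤ x → g x ≤ f x) (hf2 : ∀ x, 2 ≤ x → 2 ≤ f x)
    (hg2 : ∀ x, 2 ≤ x → 2 ≤ g x) :
    ∀ n x, 2 ≤ x → g^[n] x ≤ f^[n] x ∧ 2 ≤ f^[n] x ∧ 2 ≤ g^[n] x := by
  intro n
  induction n with
  | zero => intro x hx; simp only [Function.iterate_zero_apply]; exact ⟨le_rfl, hx, hx⟩
  | succ n ih =>
    intro x hx
    obtain ⟨h1, h2, h3⟩ := ih x hx
    rw [Function.iterate_succ_apply', Function.iterate_succ_apply']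
    exact ⟨le_trans (hg _ _ h3 h1) (hfg _ h2), hf2 _ h2, hg2 _ h3⟩

lemma triple_iter : ∀ c x, (fun y => 3*y)^[c] x = 3^c * x := by
  intro c
  induction c with
  | zero => simp
  | succ c ih => intro x; rw [Function.iterate_succ_apply, ih, pow_succ]; ring

lemma h3_ge (x : ℕ) (hx : 2 ≤ x) : 3^x ≤ h 3 x := by
  have hd := dominate (f := h 2) (g := fun y => 3*y)
    (fun a b ha hab => by omega)
    (fun a ha => by
      rw [h2_eq]
      have : 3 ≤ 2^a := by
        calc 3 ≤ 2^2 := by norm_num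
        _ ≤ 2^a := Nat.pow_le_pow_right (by norm_num) ha
      exact Nat.mul_le_mul_right a this)
    (fun a ha => by have := h_lt 2 a (by omega); omega)
    (fun a ha => by omega)
    x x hx
  rw [triple_iter] at hd
  have : 3^x ≤ 3^x * x := Nat.le_mul_of_pos_right _ (by omega)
  calc 3^x ≤ 3^x * x := this
  _ ≤ (h 2)^[x] x := hd.1
  _ = h 3 x := (h_succ 2 x).symm

lemma u_unroll : ∀ j, 1 ≤ j → ∀ x, uparrow 3 (j+1) (x+1) = (uparrow 3 j)^[x] 3 := by
  intro j hj x
  obtain ⟨j', rfl⟩ : ∃ j', j = j' + 1 := ⟨j - 1, by omega⟩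
  induction x with
  | zero => simpa using u_k2_one j'
  | succ x ih =>
    have := u_k2_b2 j' x
    rw [show x+1+1 = x+2 from rfl, this, ih, Function.iterate_succ_apply']

lemma u_le_h : ∀ j, 1 ≤ j → ∀ x, 2 ≤ x → uparrow 3 j x ≤ h (j+2) x := by
  intro j hj
  induction j, hj using Nat.le_induction with
  | base => intro x hx; rw [u_one]; exact h3_ge x hx
  | succ j hj ih =>
    intro x hx
    obtain ⟨x', rfl⟩ : ∃ x', x = x' + 1 := ⟨x - 1, by omega⟩
    rw [u_unroll j hj]
    have hmono := iter_mono (f := uparrow 3 j)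
      (fun a b ha hab => u_mono j hj ha hab)
      (fun a ha => by have := u_ge j a hj ha; omega)
    have step1 : (uparrow 3 j)^[x'] 3 ≤ (uparrow 3 j)^[x'] (uparrow 3 j (x'+1)) := by
      have h3le : 3 ≤ uparrow 3 j (x'+1) := by
        have := u_ge j (x'+1) hj (by omega)
        omega
      exact (hmono x' 3 _ (by omega) h3le).1
    have step2 : (uparrow 3 j)^[x'] (uparrow 3 j (x'+1)) = (uparrow 3 j)^[x'+1] (x'+1) := by
      rw [Function.iterate_succ_apply]
    have step3 : (uparrow 3 j)^[x'+1] (x'+1) ≤ (h (j+2))^[x'+1] (x'+1) :=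
      (dominate (f := h (j+2)) (g := uparrow 3 j)
        (fun a b ha hab => u_mono j hj (by omega) hab)
        (fun a ha => ih a ha)
        (fun a ha => by have := h_lt (j+2) a (by omega); omega)
        (fun a ha => by have := u_ge j a hj (by omega); omega)
        (x'+1) (x'+1) hx).1
    calc (uparrow 3 j)^[x'] 3 ≤ (uparrow 3 j)^[x'+1] (x'+1) := by rw [← step2]; exact step1
    _ ≤ (h (j+2))^[x'+1] (x'+1) := step3
    _ = h (j+3) (x'+1) := (h_succ (j+2) (x'+1)).symm

def A (k : ℕ) : ℕ := uparrow 3 (k-1) 2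

lemma A_ge9 (k : ℕ) (hk : 2 ≤ k) : 9 ≤ A k := by
  have := u_k2_ge9 (k-1) (by omega)
  unfold A; omega

lemma u3_2_2 : uparrow 3 2 2 = 27 := by
  have h1 := u_k2_b2 0 0
  have h2 := u_k2_one 0
  rw [h2] at h1
  rw [show (0:ℕ)+2 = 2 from rfl, show (0:ℕ)+1 = 1 from rfl] at h1
  rw [h1, u_one]; norm_num

lemma growth : ∀ k, 2 ≤ k → uparrow 3 k 2 ≤ h k (A k) := by
  intro k hk
  rcases Nat.lt_or_ge k 3 with h3 | h3
  · have : k = 2 := by omega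
    subst this
    rw [u3_2_2, show A 2 = uparrow 3 1 2 from rfl, u_one, h2_eq]
    norm_num
  · obtain ⟨k', rfl⟩ : ∃ k', k = k' + 3 := ⟨k - 3, by omega⟩
    have e1 : uparrow 3 (k'+3) 2 = uparrow 3 (k'+2) 3 := by
      have := u_k2_b2 (k'+1) 0
      rw [u_k2_one (k'+1)] at this
      exact this
    have e2 : uparrow 3 (k'+2) 3 = uparrow 3 (k'+1) (uparrow 3 (k'+2) 2) := by
      have := u_k2_b2 k' 1
      exact this
    have e3 : A (k'+3) = uparrow 3 (k'+2) 2 := rfl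
    rw [e1, e2, ← e3]
    exact u_le_h (k'+1) (by omega) (A (k'+3)) (by have := A_ge9 (k'+3) (by omega); omega)

-- p-level lemmas (inside namespace WIT, after t5 content)
noncomputable def p (i : ℕ) : List ℕ :=
  if i ≤ 8 then [0, i]
  else List.replicate (alphaFn i) 0 ++ 1 :: enc (alphaFn i) (A (alphaFn i)) i

lemma pfacts {i : ℕ} (hi : 9 ≤ i) :
    2 ≤ alphaFn i ∧ 9 ≤ A (alphaFn i) ∧ A (alphaFn i) ≤ i ∧
      i < h (alphaFn i) (A (alphaFn i)) := by
  have h1 := alpha_ge2 hi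
  have h2 := A_ge9 (alphaFn i) h1
  have h3 : A (alphaFn i) ≤ i := alpha_lower hi
  have h4 := (alpha_mem i).2
  have h5 := growth (alphaFn i) h1
  exact ⟨h1, h2, h3, by omega⟩

lemma p_big {i : ℕ} (hi : 9 ≤ i) :
    p i = List.replicate (alphaFn i) 0 ++ 1 :: enc (alphaFn i) (A (alphaFn i)) i := by
  rw [p, if_neg (by omega)]

lemma p_small {i : ℕ} (hi : i ≤ 8) : p i = [0, i] := by rw [p, if_pos hi]

lemma p_length_big {i : ℕ} (hi : 9 ≤ i) : (p i).length = 2 * alphaFn i + 1 := by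
  rw [p_big hi]
  simp [enc_length]
  omega

lemma p_length_le {i : ℕ} : (p i).length ≤ 3 * alphaFn i + 3 := by
  rcases Nat.lt_or_ge i 9 with h9 | h9
  · rw [p_small (by omega)]; simp
  · rw [p_length_big h9]; omega

lemma p_ne_nil {i : ℕ} : p i ≠ [] := by
  rcases Nat.lt_or_ge i 9 with h9 | h9
  · rw [p_small (by omega)]; simp
  · rw [p_big h9]
    intro hcon
    have := congrArg List.length hcon
    simp [enc_length] at this

lemma rep_prefix : ∀ k k' (t t' : List ℕ),
    (List.replicate k 0 ++ 1 :: t) <+: (List.replicate k' 0 ++ 1 :: t') →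
    k = k' ∧ t <+: t' := by
  intro k
  induction k with
  | zero =>
    intro k' t t' hp
    rcases k' with _ | k'
    · refine ⟨rfl, ?_⟩
      rw [List.replicate_zero, List.nil_append, List.nil_append,
        List.cons_prefix_cons] at hp
      exact hp.2
    · exfalso
      rw [List.replicate_zero, List.nil_append, List.replicate_succ, List.cons_append,
        List.cons_prefix_cons] at hp
      exact absurd hp.1 (by norm_num)
  | succ k ih =>
    intro k' t t' hp
    rcases k' with _ | k'
    · exfalso
      rw [List.replicate_succ, List.cons_append, List.replicate_zero, List.nil_append,
        List.cons_prefix_cons] at hp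
      exact absurd hp.1 (by norm_num)
    · rw [List.replicate_succ, List.replicate_succ, List.cons_append, List.cons_append,
        List.cons_prefix_cons] at hp
      obtain ⟨-, h2⟩ := hp
      obtain ⟨h1, h2⟩ := ih k' t t' h2
      exact ⟨by omega, h2⟩

lemma child_shape : ∀ k (t q : List ℕ) (c : ℕ),
    q ++ [c] <+: (List.replicate k 0 ++ 1 :: t) →
    c = 0 ∨ c = 1 ∨ ∃ q₂, q = List.replicate k 0 ++ 1 :: q₂ ∧ q₂ ++ [c] <+: t := by
  intro k
  induction k with
  | zero =>
    intro t q c hp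
    rw [List.replicate_zero, List.nil_append] at hp
    rcases q with _ | ⟨a, q'⟩
    · rw [List.nil_append, List.cons_prefix_cons] at hp
      right; left; exact hp.1
    · rw [List.cons_append, List.cons_prefix_cons] at hp
      right; right
      exact ⟨q', by rw [hp.1, List.replicate_zero, List.nil_append], hp.2⟩
  | succ k ih =>
    intro t q c hp
    rw [List.replicate_succ, List.cons_append] at hp
    rcases q with _ | ⟨a, q'⟩
    · rw [List.nil_append, List.cons_prefix_cons] at hp
      left; exact hp.1
    · rw [List.cons_append, List.cons_prefix_cons] at hp
      rcases ih t q' c hp.2 with h | h | ⟨q₂, hq, hpre⟩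
      · left; exact h
      · right; left; exact h
      · right; right
        refine ⟨q₂, ?_, hpre⟩
        rw [List.replicate_succ, List.cons_append, hp.1, hq]

lemma p_prefix_eq : ∀ i j, 1 ≤ i → 1 ≤ j → p i <+: p j → i = j := by
  intro i j hi hj hp
  rcases Nat.lt_or_ge i 9 with h9i | h9i <;> rcases Nat.lt_or_ge j 9 with h9j | h9j
  · rw [p_small (by omega : i ≤ 8), p_small (by omega : j ≤ 8)] at hp
    have h := hp.eq_of_length (by simp)
    simpa using h
  · exfalso
    rw [p_small (by omega), p_big h9j] at hp
    have hk := alpha_ge2 h9j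
    obtain ⟨k', hk'⟩ : ∃ k', alphaFn j = k' + 2 := ⟨alphaFn j - 2, by omega⟩
    rw [hk'] at hp
    rw [List.replicate_succ, List.replicate_succ] at hp
    simp only [List.cons_append, List.cons_prefix_cons] at hp
    obtain ⟨-, h1, -⟩ := hp
    exact absurd h1 (by omega)
  · exfalso
    have hlen := hp.length_le
    rw [p_length_big h9i, p_small (by omega)] at hlen
    have := alpha_ge2 h9i
    simp only [List.length_cons, List.length_nil] at hlen
    omega
  · rw [p_big h9i, p_big h9j] at hp
    obtain ⟨hkeq, henc⟩ := rep_prefix _ _ _ _ hp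
    obtain ⟨hki, hAi, hAilei, hilt⟩ := pfacts h9i
    obtain ⟨hkj, hAj, hAjlej, hjlt⟩ := pfacts h9j
    rw [hkeq] at henc hAilei hilt
    have heq : enc (alphaFn j) (A (alphaFn j)) i = enc (alphaFn j) (A (alphaFn j)) j :=
      henc.eq_of_length (by rw [enc_length, enc_length])
    exact enc_inj _ _ i j (by omega) hAilei hilt hAjlej hjlt heq

lemma p_child_lt : ∀ i j (q : List ℕ) (c : ℕ), 1 ≤ i → 1 ≤ j →
    q <+: p i → q ++ [c] <+: p j → c < max i 9 := by
  intro i j q c hi hj hqi hqj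
  rcases Nat.lt_or_ge j 9 with h9j | h9j
  · rw [p_small (by omega)] at hqj
    rcases q with _ | ⟨a, q'⟩
    · rw [List.nil_append, List.cons_prefix_cons] at hqj
      omega
    · rw [List.cons_append, List.cons_prefix_cons] at hqj
      rcases q' with _ | ⟨b, q''⟩
      · rw [List.nil_append, List.cons_prefix_cons] at hqj
        have : c = j := hqj.2.1
        omega
      · exfalso
        rw [List.cons_append, List.cons_prefix_cons] at hqj
        have := hqj.2.2.length_le
        simp at this
  · rw [p_big h9j] at hqj
    rcases child_shape _ _ _ _ hqj with h | h | ⟨q₂, hq, hpre⟩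
    · omega
    · omega
    · obtain ⟨hkj2, hAj, hAjlej, hjlt⟩ := pfacts h9j
      have hclt : c < pbase (alphaFn j) (A (alphaFn j)) q₂ :=
        enc_child _ _ j q₂ c (by omega) hAjlej hjlt hpre
      rcases Nat.lt_or_ge i 9 with h9i | h9i
      · exfalso
        rw [p_small (by omega)] at hqi
        have := hqi.length_le
        rw [hq] at this
        simp at this
        omega
      · rw [p_big h9i, hq] at hqi
        obtain ⟨hkeq, henc⟩ := rep_prefix _ _ _ _ hqi
        obtain ⟨hki2, hAi, hAilei, hilt⟩ := pfacts h9i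
        have hmin : pbase (alphaFn i) (A (alphaFn i)) q₂ ≤ i :=
          enc_min _ _ i q₂ (by omega) hAilei hilt henc
        rw [hkeq] at hclt
        omega

lemma dropLast_append_getLastD {l : List ℕ} (hl : l ≠ []) :
    l.dropLast ++ [l.getLastD 0] = l := by
  induction l using List.reverseRecOn with
  | nil => simp at hl
  | append_singleton ys y ih => simp

noncomputable def sF (m : ℕ) : Finset (List ℕ) :=
  (Finset.range m).biUnion fun i => ((p (i+1)).inits).toFinset

lemma mem_sF {m : ℕ} {x : List ℕ} : x ∈ sF m ↔ ∃ i, i < m ∧ x <+: p (i+1) := by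
  simp [sF, List.mem_inits]

lemma sF_closed {m : ℕ} {x : List ℕ} (hx : x ∈ sF m) : x.dropLast ∈ sF m := by
  rw [mem_sF] at hx ⊢
  obtain ⟨i, him, hpre⟩ := hx
  exact ⟨i, him, (List.dropLast_prefix x).trans hpre⟩

lemma nil_mem_sF {m : ℕ} (hm : 1 ≤ m) : [] ∈ sF m :=
  mem_sF.mpr ⟨0, by omega, List.nil_prefix⟩

noncomputable def eqv (m : ℕ) : {x // x ∈ sF m} ≃ Fin (sF m).card := (sF m).equivFin

noncomputable def Tm (m : ℕ) (hm : 1 ≤ m) : IndexTree where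
  n := (sF m).card
  npos := Finset.card_pos.mpr ⟨[], nil_mem_sF hm⟩
  root := eqv m ⟨[], nil_mem_sF hm⟩
  parent v := eqv m ⟨((eqv m).symm v).1.dropLast, sF_closed ((eqv m).symm v).2⟩
  depth v := ((eqv m).symm v).1.length
  parent_root := by
    apply congrArg
    apply Subtype.ext
    simp
  depth_root := by simp
  depth_parent := by
    intro v hv
    rw [Equiv.symm_apply_apply]
    have hne : ((eqv m).symm v).1 ≠ [] := by
      intro hnil
      apply hv
      have h1 : (eqv m).symm v = ⟨[], nil_mem_sF hm⟩ := Subtype.ext hnil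
      calc v = eqv m ((eqv m).symm v) := ((eqv m).apply_symm_apply v).symm
      _ = eqv m ⟨[], nil_mem_sF hm⟩ := by rw [h1]
    rw [List.length_dropLast]
    have : ((eqv m).symm v).1.length ≠ 0 := fun hh => hne (List.length_eq_zero_iff.mp hh)
    omega

lemma Tm_parent_coe (m : ℕ) (hm : 1 ≤ m) (v : Fin (Tm m hm).n) :
    ((eqv m).symm ((Tm m hm).parent v)).1 = ((eqv m).symm v).1.dropLast := by
  show ((eqv m).symm (eqv m ⟨((eqv m).symm v).1.dropLast, _⟩)).1 = _
  rw [Equiv.symm_apply_apply]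

lemma Tm_parent_iter (m : ℕ) (hm : 1 ≤ m) :
    ∀ (t : ℕ) (v : Fin (Tm m hm).n),
      ((eqv m).symm ((Tm m hm).parent^[t] v)).1 = List.dropLast^[t] ((eqv m).symm v).1 := by
  intro t
  induction t with
  | zero => intro v; simp
  | succ t ih =>
    intro v
    rw [Function.iterate_succ_apply, ih, Tm_parent_coe, ← Function.iterate_succ_apply]

lemma dropLast_iter_prefix : ∀ (t : ℕ) (l : List ℕ), List.dropLast^[t] l <+: l := by
  intro t
  induction t with
  | zero => intro l; simp
  | succ t ih =>
    intro l
    rw [Function.iterate_succ_apply]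
    exact (ih _).trans (List.dropLast_prefix l)

lemma build (m : ℕ) (hm : 1 ≤ m) :
    ∃ (T : IndexTree) (leaf : Fin m → Fin T.n),
      Function.Injective leaf ∧
      (∀ i, T.IsLeaf (leaf i)) ∧
      (∀ v, T.IsLeaf v → ∃ i, leaf i = v) ∧
      (∀ i : Fin m, T.depth (leaf i) ≤ 3 * alphaFn (i.1 + 1) + 3) ∧
      (∀ i : Fin m, ∀ v, T.OnRootPath v (leaf i) →
        T.numChildren v ≤ max (i.1 + 1) 9) := by
  classical
  refine ⟨Tm m hm,
    fun i => eqv m ⟨p (i.1+1), mem_sF.mpr ⟨i.1, i.2, List.prefix_refl _⟩⟩, ?_, ?_, ?_, ?_, ?_⟩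
  · -- injective
    intro i j hij
    have h1 := congrArg (fun z => ((eqv m).symm z).1) hij
    simp only [Equiv.symm_apply_apply] at h1
    have h2 := p_prefix_eq (i.1+1) (j.1+1) (by omega) (by omega) (h1 ▸ List.prefix_refl _)
    exact Fin.ext (by omega)
  · -- each leaf is a leaf
    intro i u hu
    have hx : ((eqv m).symm u).1.dropLast = p (i.1+1) := by
      have h1 := congrArg (fun z => ((eqv m).symm z).1) hu
      simp only [Tm_parent_coe, Equiv.symm_apply_apply] at h1
      exact h1
    by_contra hne
    have hxu : ((eqv m).symm u).1 ≠ p (i.1+1) := by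
      intro hh
      apply hne
      exact ((eqv m).apply_symm_apply u).symm.trans (congrArg (eqv m) (Subtype.ext hh :
        (eqv m).symm u = ⟨p (i.1+1), mem_sF.mpr ⟨i.1, i.2, List.prefix_refl _⟩⟩))
    have hnil : ((eqv m).symm u).1 ≠ [] := by
      intro hh
      rw [hh] at hx
      exact p_ne_nil (by simpa using hx.symm)
    have hsplit : ((eqv m).symm u).1
        = p (i.1+1) ++ [((eqv m).symm u).1.getLastD 0] := by
      conv_lhs => rw [← dropLast_append_getLastD hnil]
      rw [hx]
    obtain ⟨j, hjm, hpj⟩ := mem_sF.mp ((eqv m).symm u).2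
    rw [hsplit] at hpj
    have hpre : p (i.1+1) <+: p (j+1) := (List.prefix_append _ _).trans hpj
    have heq := p_prefix_eq _ _ (by omega) (by omega) hpre
    rw [show i.1+1 = j+1 from heq] at hpj
    have := hpj.length_le
    simp at this
  · -- every leaf is a labeled leaf
    intro v hv
    obtain ⟨j, hjm, hpj⟩ := mem_sF.mp ((eqv m).symm v).2
    by_cases heq : ((eqv m).symm v).1 = p (j+1)
    · refine ⟨⟨j, hjm⟩, ?_⟩
      exact (congrArg (eqv m) (Subtype.ext heq.symm :
        (⟨p (j+1), mem_sF.mpr ⟨j, hjm, List.prefix_refl _⟩⟩ : {x // x ∈ sF m}) = (eqv m).symm v)).trans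
        ((eqv m).apply_symm_apply v)
    · exfalso
      have hlt : ((eqv m).symm v).1.length < (p (j+1)).length :=
        lt_of_le_of_ne hpj.length_le (fun hl => heq (hpj.eq_of_length hl))
      set L := ((eqv m).symm v).1.length with hL
      have hu'mem : (p (j+1)).take (L+1) ∈ sF m :=
        mem_sF.mpr ⟨j, hjm, List.take_prefix _ _⟩
      set u : Fin (Tm m hm).n := eqv m ⟨(p (j+1)).take (L+1), hu'mem⟩ with hu
      have hlen' : ((p (j+1)).take (L+1)).length = L+1 := by
        rw [List.length_take]; omega
      have hd : ((p (j+1)).take (L+1)).dropLast = ((eqv m).symm v).1 := by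
        rw [List.dropLast_eq_take, hlen', List.take_take]
        have hxv : ((eqv m).symm v).1 = (p (j+1)).take L := by
          have := List.prefix_iff_eq_take.mp hpj
          simpa using this
        rw [hxv]
        congr 1
        omega
      have hparent : (Tm m hm).parent u = v := by
        apply (eqv m).symm.injective
        apply Subtype.ext
        rw [Tm_parent_coe, hu, Equiv.symm_apply_apply]
        exact hd
      have hne : u ≠ v := by
        intro hh
        have h2 := congrArg (fun z => ((eqv m).symm z).1.length) hh
        rw [hu] at h2
        simp only [Equiv.symm_apply_apply] at h2
        rw [hlen'] at h2
        omega
      exact hne (hv u hparent)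
  · -- depth bound
    intro i
    show ((eqv m).symm (eqv m ⟨p (i.1+1), _⟩)).1.length ≤ _
    rw [Equiv.symm_apply_apply]
    exact p_length_le
  · -- children bound
    intro i v hpath
    obtain ⟨t, ht⟩ := hpath
    have hxv : ((eqv m).symm v).1 = List.dropLast^[t] (p (i.1+1)) := by
      rw [← ht]
      have := Tm_parent_iter m hm t (eqv m ⟨p (i.1+1), mem_sF.mpr ⟨i.1, i.2, List.prefix_refl _⟩⟩)
      rw [Equiv.symm_apply_apply] at this
      exact this
    have hvpre : ((eqv m).symm v).1 <+: p (i.1+1) := by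
      rw [hxv]; exact dropLast_iter_prefix t _
    show ((Finset.univ.filter (fun u => (Tm m hm).parent u = v ∧ u ≠ v)).card) ≤ _
    have hcard : (Finset.range (max (i.1+1) 9)).card = max (i.1+1) 9 := Finset.card_range _
    rw [← hcard]
    apply Finset.card_le_card_of_injOn (fun u => ((eqv m).symm u).1.getLastD 0)
    · intro u hu
      replace hu : u ∈ (Finset.univ : Finset (Fin (Tm m hm).n)) ∧ ((Tm m hm).parent u = v ∧ u ≠ v) :=
        (@Finset.mem_filter _ (fun a => (Tm m hm).parent a = v ∧ a ≠ v) (fun a => @instDecidableAnd _ _ (instDecidableEqFin _ _ _) instDecidableNot) Finset.univ u).mp (Finset.mem_coe.mp hu)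
      obtain ⟨-, hpar, hne⟩ := hu
      have hxud : ((eqv m).symm u).1.dropLast = ((eqv m).symm v).1 := by
        have h1 := congrArg (fun z => ((eqv m).symm z).1) hpar
        have h1 := (Tm_parent_coe m hm u).symm.trans h1
        exact h1
      have hxune : ((eqv m).symm u).1 ≠ ((eqv m).symm v).1 := by
        intro hh
        exact hne ((eqv m).symm.injective (Subtype.ext hh))
      have hnil : ((eqv m).symm u).1 ≠ [] := by
        intro hh
        apply hxune
        rw [hh] at hxud ⊢
        simpa using hxud
      have hsplit : ((eqv m).symm u).1
          = ((eqv m).symm v).1 ++ [((eqv m).symm u).1.getLastD 0] := by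
        conv_lhs => rw [← dropLast_append_getLastD hnil]
        rw [hxud]
      obtain ⟨j, hjm, hpj⟩ := mem_sF.mp ((eqv m).symm u).2
      rw [hsplit] at hpj
      have hc := p_child_lt (i.1+1) (j+1) _ _ (by omega) (by omega) hvpre hpj
      exact Finset.mem_range.mpr hc
    · intro u hu u' hu' hfe
      replace hu : u ∈ (Finset.univ : Finset (Fin (Tm m hm).n)) ∧ ((Tm m hm).parent u = v ∧ u ≠ v) :=
        (@Finset.mem_filter _ (fun a => (Tm m hm).parent a = v ∧ a ≠ v) (fun a => @instDecidableAnd _ _ (instDecidableEqFin _ _ _) instDecidableNot) Finset.univ u).mp (Finset.mem_coe.mp hu)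
      replace hu' : u' ∈ (Finset.univ : Finset (Fin (Tm m hm).n)) ∧ ((Tm m hm).parent u' = v ∧ u' ≠ v) :=
        (@Finset.mem_filter _ (fun a => (Tm m hm).parent a = v ∧ a ≠ v) (fun a => @instDecidableAnd _ _ (instDecidableEqFin _ _ _) instDecidableNot) Finset.univ u').mp (Finset.mem_coe.mp hu')
      obtain ⟨-, hpar, hne⟩ := hu
      obtain ⟨-, hpar', hne'⟩ := hu'
      have hxud : ((eqv m).symm u).1.dropLast = ((eqv m).symm v).1 := by
        have h1 := congrArg (fun z => ((eqv m).symm z).1) hpar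
        have h1 := (Tm_parent_coe m hm u).symm.trans h1; exact h1
      have hxud' : ((eqv m).symm u').1.dropLast = ((eqv m).symm v).1 := by
        have h1 := congrArg (fun z => ((eqv m).symm z).1) hpar'
        have h1 := (Tm_parent_coe m hm u').symm.trans h1; exact h1
      have hnil : ((eqv m).symm u).1 ≠ [] := by
        intro hh
        apply hne
        apply (eqv m).symm.injective
        apply Subtype.ext
        rw [hh] at hxud
        rw [hh, ← hxud]
        simp
      have hnil' : ((eqv m).symm u').1 ≠ [] := by
        intro hh
        apply hne'
        apply (eqv m).symm.injective
        apply Subtype.ext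
        rw [hh] at hxud'
        rw [hh, ← hxud']
        simp
      apply (eqv m).symm.injective
      apply Subtype.ext
      calc ((eqv m).symm u).1
          = ((eqv m).symm u).1.dropLast ++ [((eqv m).symm u).1.getLastD 0] :=
            (dropLast_append_getLastD hnil).symm
      _ = ((eqv m).symm u').1.dropLast ++ [((eqv m).symm u').1.getLastD 0] := by
            dsimp only at hfe
            rw [hxud, hxud', hfe]
      _ = ((eqv m).symm u').1 := dropLast_append_getLastD hnil'

end WIT

/-- Weak index-tree lemma: for every `m ≥ 1` there is a rooted tree with exactly `m`
leaves, labeled `1` through `m`, such that (1) the `i`-th leaf has depth at most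
`C·α(i) + C` for an absolute constant `C`, and (2) every node on the root-to-leaf
path of the `i`-th leaf has at most `max i 9` children. -/


theorem weak_index_tree :
    ∃ C : ℕ, ∀ m : ℕ, 1 ≤ m →
      ∃ (T : IndexTree) (leaf : Fin m → Fin T.n),
        Function.Injective leaf ∧
        (∀ i, T.IsLeaf (leaf i)) ∧
        (∀ v, T.IsLeaf v → ∃ i, leaf i = v) ∧
        (∀ i : Fin m, T.depth (leaf i) ≤ C * alphaFn (i.1 + 1) + C) ∧
        (∀ i : Fin m, ∀ v, T.OnRootPath v (leaf i) →
          T.numChildren v ≤ max (i.1 + 1) 9) := ⟨3, fun m hm => WIT.build m hm⟩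
end

section
/- Let T be a rooted tree in which every leaf has depth at most d and every internal node has at most n children, with n ≥ 4. Then there exists a rooted tree T' with the same leaf set such that every leaf has depth at most 2d and every internal node has at most 3·⌈√n⌉ children. -/
/-- `⌈√n⌉`, the least integer whose square is at least `n`. -/
def ceilSqrt (n : ℕ) : ℕ :=
  if Nat.sqrt n * Nat.sqrt n = n then Nat.sqrt n else Nat.sqrt n + 1

namespace Aux

variable (T : IndexTree)

lemma depth_eq_zero {v : Fin T.n} (h : T.depth v = 0) : v = T.root := by
  by_contra hv
  have := T.depth_parent v hv
  omega

lemma ne_root_of_depth_pos {v : Fin T.n} (h : 0 < T.depth v) : v ≠ T.root := by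
  intro hv; rw [hv, T.depth_root] at h; omega

lemma iterate_depth : ∀ (t : ℕ) (v : Fin T.n), t ≤ T.depth v →
    T.depth (T.parent^[t] v) + t = T.depth v := by
  intro t
  induction t with
  | zero => intro v _; simp
  | succ t ih =>
    intro v hv
    have hvr : v ≠ T.root := by
      intro h; rw [h, T.depth_root] at hv; omega
    have hd := T.depth_parent v hvr
    rw [Function.iterate_succ_apply]
    have := ih (T.parent v) (by omega)
    omega

lemma iterate_full (v : Fin T.n) : T.parent^[T.depth v] v = T.root := by
  apply depth_eq_zero
  have := iterate_depth T (T.depth v) v le_rfl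
  omega

/-- the set of children of `p` -/
def children (p : Fin T.n) : Finset (Fin T.n) :=
  Finset.univ.filter (fun u => T.parent u = p ∧ u ≠ p)

lemma mem_children {v : Fin T.n} (hv : v ≠ T.root) : v ∈ children T (T.parent v) := by
  have hd := T.depth_parent v hv
  rw [children, Finset.mem_filter]
  exact ⟨Finset.mem_univ _, rfl, fun h => by rw [← h] at hd; omega⟩

/-- rank of `v` among children of its parent -/
def idx (v : Fin T.n) : ℕ :=
  ((children T (T.parent v)).filter (fun u => u < v)).card

lemma idx_lt {v : Fin T.n} (hv : v ≠ T.root) :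
    idx T v < T.numChildren (T.parent v) := by
  have hm := mem_children T hv
  apply Finset.card_lt_card
  constructor
  · exact Finset.filter_subset _ _
  · intro h
    have := h hm
    simp at this

lemma not_isLeaf_parent {v : Fin T.n} (hv : v ≠ T.root) : ¬ T.IsLeaf (T.parent v) := by
  intro h
  have hm := mem_children T hv
  rw [children, Finset.mem_filter] at hm
  exact hm.2.2 (h v hm.2.1)

lemma idx_lt_idx {a b : Fin T.n} (ha : a ≠ T.root) (hab : T.parent a = T.parent b)
    (hlt : a < b) : idx T a < idx T b := by
  unfold idx
  rw [hab]
  apply Finset.card_lt_card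
  constructor
  · exact Finset.monotone_filter_right _ (fun u _ hu => lt_trans hu hlt)
  · intro h
    have hm : a ∈ (children T (T.parent b)).filter (fun u => u < b) := by
      rw [Finset.mem_filter]
      exact ⟨by rw [← hab]; exact mem_children T ha, hlt⟩
    have := h hm
    simp at this

lemma idx_inj {a b : Fin T.n} (ha : a ≠ T.root) (hb : b ≠ T.root)
    (hab : T.parent a = T.parent b) (hidx : idx T a = idx T b) : a = b := by
  rcases lt_trichotomy a b with h | h | h
  · exact absurd hidx (Nat.ne_of_lt (idx_lt_idx T ha hab h))
  · exact h
  · exact absurd hidx.symm (Nat.ne_of_lt (idx_lt_idx T hb hab.symm h))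

end Aux

namespace Aux
open Classical

lemma exists_leaf (T : IndexTree) : ∃ v, T.IsLeaf v := by
  have hne : (Finset.univ : Finset (Fin T.n)).Nonempty := by
    have : (0 : ℕ) < T.n := T.npos
    exact ⟨⟨0, this⟩, Finset.mem_univ _⟩
  obtain ⟨v, -, hv⟩ := Finset.exists_max_image Finset.univ T.depth hne
  refine ⟨v, fun u hu => ?_⟩
  by_contra hne'
  have hur : u ≠ T.root := by
    intro h
    apply hne'
    rw [h] at hu ⊢
    rw [T.parent_root] at hu
    exact hu
  have := T.depth_parent u hur
  rw [hu] at this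
  have := hv u (Finset.mem_univ u)
  omega

variable (T : IndexTree) (d n : ℕ)

lemma idx_lt_n (hchild : ∀ v, ¬ T.IsLeaf v → T.numChildren v ≤ n)
    {v : Fin T.n} (hv : v ≠ T.root) : idx T v < n :=
  lt_of_lt_of_le (idx_lt T hv) (hchild _ (not_isLeaf_parent T hv))

/-- the coding function of a leaf -/
noncomputable def code (hn : 0 < n) (hchild : ∀ v, ¬ T.IsLeaf v → T.numChildren v ≤ n)
    (v : Fin T.n) : Fin d → Fin n :=
  fun i =>
    if h : i.val + 1 ≤ T.depth v then
      ⟨idx T (T.parent^[T.depth v - (i.val + 1)] v), by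
        apply idx_lt_n T n hchild
        apply ne_root_of_depth_pos
        have := iterate_depth T (T.depth v - (i.val + 1)) v (by omega)
        omega⟩
    else ⟨0, hn⟩

lemma anc_eq (hn : 0 < n) (hchild : ∀ v, ¬ T.IsLeaf v → T.numChildren v ≤ n)
    (hdepth : ∀ v, T.IsLeaf v → T.depth v ≤ d)
    {v w : Fin T.n} (hv : T.IsLeaf v) (hw : T.IsLeaf w)
    (hcode : code T d n hn hchild v = code T d n hn hchild w) :
    ∀ i, i ≤ T.depth v → i ≤ T.depth w →
      T.parent^[T.depth v - i] v = T.parent^[T.depth w - i] w := by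
  intro i
  induction i with
  | zero =>
    intro _ _
    simp only [Nat.sub_zero]
    rw [iterate_full, iterate_full]
  | succ i ih =>
    intro hiv hiw
    have hpar : T.parent (T.parent^[T.depth v - (i+1)] v)
        = T.parent (T.parent^[T.depth w - (i+1)] w) := by
      have h1 : T.depth v - (i+1) + 1 = T.depth v - i := by omega
      have h2 : T.depth w - (i+1) + 1 = T.depth w - i := by omega
      have e1 := Function.iterate_succ_apply' T.parent (T.depth v - (i+1)) v
      have e2 := Function.iterate_succ_apply' T.parent (T.depth w - (i+1)) w
      simp only [Nat.succ_eq_add_one] at e1 e2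
      rw [h1] at e1
      rw [h2] at e2
      rw [← e1, ← e2]
      exact ih (by omega) (by omega)
    have hda := iterate_depth T (T.depth v - (i+1)) v (by omega)
    have hdb := iterate_depth T (T.depth w - (i+1)) w (by omega)
    have hanr : T.parent^[T.depth v - (i+1)] v ≠ T.root :=
      ne_root_of_depth_pos T (by omega)
    have hbnr : T.parent^[T.depth w - (i+1)] w ≠ T.root :=
      ne_root_of_depth_pos T (by omega)
    have hid : i < d := by
      have := hdepth v hv; omega
    have hcc := congrFun hcode ⟨i, hid⟩
    unfold code at hcc
    rw [dif_pos (show (⟨i, hid⟩ : Fin d).val + 1 ≤ T.depth v from hiv),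
        dif_pos (show (⟨i, hid⟩ : Fin d).val + 1 ≤ T.depth w from hiw)] at hcc
    have hidx : idx T (T.parent^[T.depth v - (i+1)] v)
        = idx T (T.parent^[T.depth w - (i+1)] w) := by
      exact congrArg Fin.val hcc
    exact idx_inj T hanr hbnr hpar hidx

lemma code_inj_aux (hn : 0 < n) (hchild : ∀ v, ¬ T.IsLeaf v → T.numChildren v ≤ n)
    (hdepth : ∀ v, T.IsLeaf v → T.depth v ≤ d)
    {v w : Fin T.n} (hv : T.IsLeaf v) (hw : T.IsLeaf w)
    (hcode : code T d n hn hchild v = code T d n hn hchild w)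
    (hkm : T.depth v ≤ T.depth w) : v = w := by
  have h := anc_eq T d n hn hchild hdepth hv hw hcode (T.depth v) le_rfl hkm
  simp only [Nat.sub_self, Function.iterate_zero, id] at h
  rcases Nat.eq_or_lt_of_le hkm with heq | hlt
  · have h0 : T.depth w - T.depth v = 0 := by omega
    rw [h0] at h
    simpa using h
  · exfalso
    have hstep : T.depth w - T.depth v - 1 + 1 = T.depth w - T.depth v := by omega
    have hpb : T.parent (T.parent^[T.depth w - T.depth v - 1] w) = v := by
      have hit := Function.iterate_succ_apply' T.parent (T.depth w - T.depth v - 1) w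
      simp only [Nat.succ_eq_add_one] at hit
      rw [hstep] at hit
      rw [← hit]
      exact h.symm
    have hdb := iterate_depth T (T.depth w - T.depth v - 1) w (by omega)
    have hbv := hv _ hpb
    rw [hbv] at hdb
    omega

lemma leaf_card_le (hn : 0 < n)
    (hdepth : ∀ v, T.IsLeaf v → T.depth v ≤ d)
    (hchild : ∀ v, ¬ T.IsLeaf v → T.numChildren v ≤ n) :
    Fintype.card {v : Fin T.n // T.IsLeaf v} ≤ n ^ d := by
  classical
  have hinj : Function.Injective
      (fun v : {v : Fin T.n // T.IsLeaf v} => code T d n hn hchild v.val) := by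
    intro ⟨v, hv⟩ ⟨w, hw⟩ h
    simp only at h
    rcases le_total (T.depth v) (T.depth w) with hle | hle
    · exact Subtype.ext (code_inj_aux T d n hn hchild hdepth hv hw h hle)
    · exact Subtype.ext (code_inj_aux T d n hn hchild hdepth hw hv h.symm hle).symm
  calc Fintype.card {v : Fin T.n // T.IsLeaf v}
      ≤ Fintype.card (Fin d → Fin n) := Fintype.card_le_of_injective _ hinj
    _ = n ^ d := by simp

end Aux

namespace Aux
open Classical

variable {S : Type} [Fintype S] (rt : S) (par : S → S) (dep : S → ℕ)
  (h1 : par rt = rt) (h2 : dep rt = 0) (h3 : ∀ v, v ≠ rt → dep v = dep (par v) + 1)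

noncomputable def ofFintype : IndexTree where
  n := Fintype.card S
  npos := Fintype.card_pos_iff.mpr ⟨rt⟩
  root := Fintype.equivFin S rt
  parent x := Fintype.equivFin S (par ((Fintype.equivFin S).symm x))
  depth x := dep ((Fintype.equivFin S).symm x)
  parent_root := by simp [h1]
  depth_root := by simp [h2]
  depth_parent := by
    intro v hv
    simp only [Equiv.symm_apply_apply]
    refine h3 _ (fun h => hv ?_)
    rw [← h]
    simp

lemma ofFintype_isLeaf (s : S) :
    (ofFintype rt par dep h1 h2 h3).IsLeaf (Fintype.equivFin S s) ↔
      ∀ u, par u = s → u = s := by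
  constructor
  · intro h u hu
    have := h (Fintype.equivFin S u) (by simp [ofFintype, hu])
    exact (Fintype.equivFin S).injective this
  · intro h x hx
    simp only [ofFintype] at hx
    have := h ((Fintype.equivFin S).symm x) ((Fintype.equivFin S).injective hx)
    rw [← this]
    exact ((Fintype.equivFin S).apply_symm_apply x).symm

lemma ofFintype_depth (s : S) :
    (ofFintype rt par dep h1 h2 h3).depth (Fintype.equivFin S s) = dep s := by
  simp [ofFintype]

lemma ofFintype_numChildren (s : S) :
    (ofFintype rt par dep h1 h2 h3).numChildren (Fintype.equivFin S s) =
      (Finset.univ.filter (fun u => par u = s ∧ u ≠ s)).card := by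
  unfold IndexTree.numChildren
  apply Finset.card_bij (fun x _ => (Fintype.equivFin S).symm x)
  · intro x hx
    simp only [Finset.mem_filter, Finset.mem_univ, true_and, ofFintype] at hx ⊢
    obtain ⟨-, hx1, hx2⟩ := Finset.mem_filter.mp hx
    constructor
    · exact (Fintype.equivFin S).injective (by simpa using hx1)
    · intro h
      apply hx2
      rw [← h]
      simp
  · intro x hx y hy hxy
    exact (Fintype.equivFin S).symm.injective hxy
  · intro u hu
    refine ⟨Fintype.equivFin S u, ?_, by simp⟩
    simp only [Finset.mem_filter, Finset.mem_univ, true_and, ofFintype] at hu ⊢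
    obtain ⟨hu1, hu2⟩ := hu
    refine Finset.mem_filter.mpr ⟨Finset.mem_univ _, ?_, ?_⟩
    · simp [hu1]
    · intro h
      exact hu2 ((Fintype.equivFin S).injective h)

end Aux

namespace Aux
open Classical

lemma lt_cdiv {L M j : ℕ} (hM : 0 < M) : j < (L + M - 1) / M ↔ j * M < L := by
  rw [Nat.lt_iff_add_one_le, Nat.le_div_iff_mul_le hM]
  have : (j + 1) * M = j * M + M := by ring
  omega

section Tree

variable (L D B : ℕ)

def cfun (t : ℕ) : ℕ := (L + B ^ (D - t) - 1) / B ^ (D - t)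

lemma lt_cfun (hB : 1 ≤ B) (t j : ℕ) : j < cfun L D B t ↔ j * B ^ (D - t) < L :=
  lt_cdiv (pow_pos hB _)

lemma cfun_pos (hB : 1 ≤ B) (hL : 1 ≤ L) (t : ℕ) : 0 < cfun L D B t :=
  (lt_cfun L D B hB t 0).mpr (by simp only [zero_mul]; omega)

lemma cfun_zero (hB : 1 ≤ B) (hLB : L ≤ B ^ D) : cfun L D B 0 ≤ 1 := by
  by_contra h
  have h1 : 1 < cfun L D B 0 := by omega
  rw [lt_cfun L D B hB] at h1
  simp only [Nat.sub_zero, one_mul] at h1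
  omega

lemma cfun_D : cfun L D B D = L := by
  simp [cfun]

abbrev SNode := (t : Fin (D + 1)) × Fin (cfun L D B t.val)

noncomputable instance : Fintype (SNode L D B) := by unfold SNode; infer_instance

lemma snode_ext {s1 s2 : SNode L D B} (h1 : s1.1 = s2.1) (h2 : s1.2.val = s2.2.val) :
    s1 = s2 := by
  obtain ⟨t1, j1⟩ := s1
  obtain ⟨t2, j2⟩ := s2
  simp only at h1
  subst h1
  simp only at h2
  exact congrArg _ (Fin.ext h2)

def srt (hB : 1 ≤ B) (hL : 1 ≤ L) : SNode L D B :=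
  ⟨⟨0, Nat.succ_pos D⟩, ⟨0, cfun_pos L D B hB hL 0⟩⟩

def spar (hB : 1 ≤ B) : SNode L D B → SNode L D B := fun s =>
  if h : s.1.val = 0 then s else
    ⟨⟨s.1.val - 1, by have := s.1.isLt; omega⟩,
     ⟨s.2.val / B, by
        show s.2.val / B < cfun L D B (s.1.val - 1)
        have hj := (lt_cfun L D B hB s.1.val s.2.val).mp s.2.isLt
        rw [lt_cfun L D B hB]
        have ht : s.1.val ≤ D := by have := s.1.isLt; omega
        have hpow : D - (s.1.val - 1) = (D - s.1.val) + 1 := by omega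
        calc s.2.val / B * B ^ (D - (s.1.val - 1))
            = s.2.val / B * B * B ^ (D - s.1.val) := by rw [hpow, pow_succ]; ring
          _ ≤ s.2.val * B ^ (D - s.1.val) :=
              Nat.mul_le_mul_right _ (Nat.div_mul_le_self _ _)
          _ < L := hj⟩⟩

def sdep : SNode L D B → ℕ := fun s => s.1.val

variable {L D B}

lemma spar_srt (hB : 1 ≤ B) (hL : 1 ≤ L) :
    spar L D B hB (srt L D B hB hL) = srt L D B hB hL := by
  unfold spar srt
  rw [dif_pos rfl]

lemma eq_srt (hB : 1 ≤ B) (hL : 1 ≤ L) (hLB : L ≤ B ^ D) {s : SNode L D B}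
    (h : s.1.val = 0) : s = srt L D B hB hL := by
  apply snode_ext
  · exact Fin.ext h
  · have h1 : s.2.val < cfun L D B s.1.val := s.2.isLt
    have hcc : cfun L D B s.1.val = cfun L D B 0 := by rw [h]
    have := cfun_zero L D B hB hLB
    show s.2.val = 0
    omega

lemma sdep_srt (hB : 1 ≤ B) (hL : 1 ≤ L) : sdep L D B (srt L D B hB hL) = 0 := rfl

lemma sdep_spar (hB : 1 ≤ B) (hL : 1 ≤ L) (hLB : L ≤ B ^ D) (s : SNode L D B)
    (hs : s ≠ srt L D B hB hL) :
    sdep L D B s = sdep L D B (spar L D B hB s) + 1 := by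
  have h0 : s.1.val ≠ 0 := fun h => hs (eq_srt hB hL hLB h)
  unfold spar sdep
  rw [dif_neg h0]
  simp only
  omega

/-- structure of children: if `spar u = s` and `u ≠ s` then `u` is one level below. -/
lemma child_struct (hB : 1 ≤ B) {s u : SNode L D B}
    (hpu : spar L D B hB u = s) (hne : u ≠ s) :
    u.1.val = s.1.val + 1 ∧ u.2.val / B = s.2.val := by
  by_cases h0 : u.1.val = 0
  · exact absurd (by rw [← hpu]; unfold spar; rw [dif_pos h0]) hne
  · unfold spar at hpu
    rw [dif_neg h0] at hpu
    have hfst := congrArg (fun z : SNode L D B => z.1.val) hpu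
    have hsnd := congrArg (fun z : SNode L D B => z.2.val) hpu
    simp only at hfst hsnd
    exact ⟨by omega, hsnd⟩

lemma sleaf_iff (hB : 1 ≤ B) (s : SNode L D B) :
    (∀ u, spar L D B hB u = s → u = s) ↔ s.1.val = D := by
  constructor
  · intro h
    by_contra hD
    have htD : s.1.val < D := by have := s.1.isLt; omega
    have pf : s.2.val * B < cfun L D B (s.1.val + 1) := by
      rw [lt_cfun L D B hB]
      have hj := (lt_cfun L D B hB s.1.val s.2.val).mp s.2.isLt
      have hpow : D - s.1.val = (D - (s.1.val + 1)) + 1 := by omega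
      calc s.2.val * B * B ^ (D - (s.1.val + 1))
          = s.2.val * B ^ (D - s.1.val) := by rw [hpow, pow_succ]; ring
        _ < L := hj
    set u : SNode L D B := ⟨⟨s.1.val + 1, by omega⟩, ⟨s.2.val * B, pf⟩⟩ with hu
    have hpu : spar L D B hB u = s := by
      unfold spar
      rw [dif_neg (by simp [hu])]
      apply snode_ext
      · apply Fin.ext
        simp [hu]
      · show s.2.val * B / B = s.2.val
        exact Nat.mul_div_cancel _ (by omega)
    have heq := h u hpu
    have := congrArg (fun z : SNode L D B => z.1.val) heq
    simp [hu] at this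
  · intro hD u hu
    by_contra hne
    have := (child_struct hB hu hne).1
    have := u.1.isLt
    omega

lemma children_card (hB : 1 ≤ B) (s : SNode L D B) :
    (Finset.univ.filter (fun u => spar L D B hB u = s ∧ u ≠ s)).card ≤ B := by
  have h := Finset.card_le_card_of_injOn (f := fun u : SNode L D B => u.2.val % B)
    (s := Finset.univ.filter (fun u => spar L D B hB u = s ∧ u ≠ s))
    (t := Finset.range B) ?_ ?_
  · simpa using h
  · intro u hu
    simp only [Finset.mem_coe, Finset.mem_range]
    exact Nat.mod_lt _ (by omega)
  · intro u1 h1 u2 h2 heq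
    simp only [Finset.mem_coe, Finset.mem_filter, Finset.mem_univ, true_and] at h1 h2
    obtain ⟨c1, d1⟩ := child_struct hB h1.1 h1.2
    obtain ⟨c2, d2⟩ := child_struct hB h2.1 h2.2
    have heq' : u1.2.val % B = u2.2.val % B := heq
    apply snode_ext
    · exact Fin.ext (by omega)
    · show u1.2.val = u2.2.val
      calc u1.2.val = B * (u1.2.val / B) + u1.2.val % B := (Nat.div_add_mod _ _).symm
        _ = B * (u2.2.val / B) + u2.2.val % B := by rw [d1, d2, heq']
        _ = u2.2.val := Nat.div_add_mod _ _

noncomputable def leavesEquiv : {s : SNode L D B // s.1.val = D} ≃ Fin L where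
  toFun s := ⟨s.val.2.val, by
    have h := s.val.2.isLt
    have hcc : cfun L D B s.val.1.val = L := by rw [s.prop, cfun_D]
    omega⟩
  invFun j := ⟨⟨⟨D, by omega⟩, ⟨j.val, by
    show j.val < cfun L D B D
    rw [cfun_D]
    exact j.isLt⟩⟩, rfl⟩
  left_inv s := Subtype.ext (snode_ext L D B (Fin.ext s.prop.symm) rfl)
  right_inv j := Fin.ext rfl

end Tree

lemma exists_tree (L D B : ℕ) (hL : 1 ≤ L) (hB : 1 ≤ B) (hLB : L ≤ B ^ D) :
    ∃ T' : IndexTree,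
      Nonempty ({v : Fin T'.n // T'.IsLeaf v} ≃ Fin L) ∧
      (∀ v, T'.IsLeaf v → T'.depth v ≤ D) ∧
      (∀ v, ¬ T'.IsLeaf v → T'.numChildren v ≤ B) := by
  classical
  refine ⟨ofFintype (srt L D B hB hL) (spar L D B hB) (sdep L D B)
    (spar_srt hB hL) (sdep_srt hB hL) (sdep_spar hB hL hLB), ?_, ?_, ?_⟩
  · set e := Fintype.equivFin (SNode L D B) with he
    refine ⟨Equiv.trans (Equiv.subtypeEquiv e.symm (fun x => ?_)) (leavesEquiv)⟩
    refine Iff.trans ?_ (sleaf_iff hB (e.symm x))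
    conv_lhs => rw [show x = e (e.symm x) from (e.apply_symm_apply x).symm]
    exact ofFintype_isLeaf _ _ _ _ _ _ _
  · intro v _
    set e := Fintype.equivFin (SNode L D B) with he
    have hv : v = e (e.symm v) := (e.apply_symm_apply v).symm
    rw [hv, ofFintype_depth]
    have := (e.symm v).1.isLt
    show (e.symm v).1.val ≤ D
    omega
  · intro v _
    set e := Fintype.equivFin (SNode L D B) with he
    have hv : v = e (e.symm v) := (e.apply_symm_apply v).symm
    rw [hv, ofFintype_numChildren]
    convert children_card hB _

end Aux

namespace Aux

lemma ceilSqrt_sq (n : ℕ) : n ≤ ceilSqrt n ^ 2 := by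
  unfold ceilSqrt
  split
  · next h => rw [pow_two, h]
  · have := Nat.lt_succ_sqrt n
    simpa [Nat.succ_eq_add_one, pow_two] using this.le

lemma ceilSqrt_pos (n : ℕ) (hn : 1 ≤ n) : 0 < ceilSqrt n := by
  unfold ceilSqrt
  split
  · next h =>
    rcases Nat.eq_zero_or_pos (Nat.sqrt n) with h0 | h0
    · rw [h0] at h; omega
    · exact h0
  · omega

end Aux

/-- Subdivision step: if in a rooted tree every leaf has depth at most `d` and every
internal node has at most `n ≥ 4` children, then there is a rooted tree with the
same leaf set in which every leaf has depth at most `2d` and every internal node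
has at most `3·⌈√n⌉` children. -/
theorem subdivision_step (T : IndexTree) (d n : ℕ) (hn : 4 ≤ n)
    (hdepth : ∀ v, T.IsLeaf v → T.depth v ≤ d)
    (hchild : ∀ v, ¬ T.IsLeaf v → T.numChildren v ≤ n) :
    ∃ T' : IndexTree,
      Nonempty ({v : Fin T.n // T.IsLeaf v} ≃ {v : Fin T'.n // T'.IsLeaf v}) ∧
      (∀ v, T'.IsLeaf v → T'.depth v ≤ 2 * d) ∧
      (∀ v, ¬ T'.IsLeaf v → T'.numChildren v ≤ 3 * ceilSqrt n) := by
  classical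
  set L := Fintype.card {v : Fin T.n // T.IsLeaf v} with hL
  have hL1 : 1 ≤ L := by
    obtain ⟨v, hv⟩ := Aux.exists_leaf T
    rw [hL]
    exact Fintype.card_pos_iff.mpr ⟨⟨v, hv⟩⟩
  have hLn : L ≤ n ^ d := Aux.leaf_card_le T d n (by omega) hdepth hchild
  have hB1 : 1 ≤ 3 * ceilSqrt n := by
    have := Aux.ceilSqrt_pos n (by omega)
    omega
  have hLB : L ≤ (3 * ceilSqrt n) ^ (2 * d) := by
    calc L ≤ n ^ d := hLn
      _ ≤ (ceilSqrt n ^ 2) ^ d := Nat.pow_le_pow_left (Aux.ceilSqrt_sq n) d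
      _ = ceilSqrt n ^ (2 * d) := (pow_mul _ 2 d).symm
      _ ≤ (3 * ceilSqrt n) ^ (2 * d) := Nat.pow_le_pow_left (by omega) _
  obtain ⟨T', ⟨e⟩, h1, h2⟩ := Aux.exists_tree L (2 * d) (3 * ceilSqrt n) hL1 hB1 hLB
  exact ⟨T', ⟨(Fintype.equivFin _).trans e.symm⟩, h1, h2⟩
end

section
/- Suppose buckets satisfy the size invariant |H_i| ≤ 2^⌊i/2⌋ and the age invariant Γ(x) ≥ Σ_{j < i, j non-vacant} 2^⌊j/2⌋ for x ∈ H_i. If H_{2i+2} is vacant and H_{2i}, H_{2i+1} are non-vacant, then melding H_{2i} and H_{2i+1} into bucket position 2i+2 (making positions 2i and 2i+1 vacant) preserves both the size invariant and the age invariant. -/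
/-- The size invariant: a non-vacant bucket at position `i` has at most `2^⌊i/2⌋`
elements. Vacant positions hold `none`. -/
def SizeInv {X : Type*} (H : ℕ → Option (Finset X)) : Prop :=
  ∀ i B, H i = some B → B.card ≤ 2 ^ (i / 2)

/-- The age invariant: every element `x` of the bucket at position `i` has age at
least the sum of the maximum sizes `2^⌊j/2⌋` over non-vacant positions `j < i`. -/
def AgeInv {X : Type*} (Γ : X → ℕ) (H : ℕ → Option (Finset X)) : Prop :=
  ∀ i B x, H i = some B → x ∈ B →
    (∑ j ∈ Finset.range i, if (H j).isSome then 2 ^ (j / 2) else 0) ≤ Γ x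

/-- If `H_(2i+2)` is vacant and `H_(2i)`, `H_(2i+1)` are non-vacant, then melding
`H_(2i)` and `H_(2i+1)` into position `2i+2` (making positions `2i` and `2i+1`
vacant) preserves both the size invariant and the age invariant. -/
theorem meld_preserves_invariants {X : Type*} [DecidableEq X]
    (H : ℕ → Option (Finset X)) (Γ : X → ℕ) (i : ℕ) (B₁ B₂ : Finset X)
    (h0 : H (2 * i) = some B₁) (h1 : H (2 * i + 1) = some B₂)
    (h2 : H (2 * i + 2) = none)
    (hsize : SizeInv H) (hage : AgeInv Γ H) :
    SizeInv (fun j => if j = 2 * i + 2 then some (B₁ ∪ B₂)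
      else if j = 2 * i ∨ j = 2 * i + 1 then none else H j) ∧
    AgeInv Γ (fun j => if j = 2 * i + 2 then some (B₁ ∪ B₂)
      else if j = 2 * i ∨ j = 2 * i + 1 then none else H j) := by
  set H' : ℕ → Option (Finset X) := fun j => if j = 2 * i + 2 then some (B₁ ∪ B₂)
      else if j = 2 * i ∨ j = 2 * i + 1 then none else H j with hH'
  have hsame : ∀ j, j ≠ 2 * i → j ≠ 2 * i + 1 → j ≠ 2 * i + 2 → H' j = H j := by
    intro j hj0 hj1 hj2
    simp only [hH']
    rw [if_neg hj2, if_neg (by tauto)]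
  have h'0 : H' (2 * i) = none := by simp [hH']
  have h'1 : H' (2 * i + 1) = none := by simp [hH']
  have h'2 : H' (2 * i + 2) = some (B₁ ∪ B₂) := by simp [hH']
  -- abbreviations for the prefix sums
  set news : ℕ → ℕ := fun k => ∑ j ∈ Finset.range k, if (H' j).isSome then 2 ^ (j / 2) else 0
    with hnews
  set olds : ℕ → ℕ := fun k => ∑ j ∈ Finset.range k, if (H j).isSome then 2 ^ (j / 2) else 0
    with holds
  have eq2i : news (2 * i) = olds (2 * i) := by
    refine Finset.sum_congr rfl fun j hj => ?_
    rw [hsame j (by simp at hj; omega) (by simp at hj; omega) (by simp at hj; omega)]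
  have new21 : news (2 * i + 1) = olds (2 * i) := by
    simp only [hnews, Finset.sum_range_succ]
    rw [h'0]; simpa using eq2i
  have new22 : news (2 * i + 2) = olds (2 * i) := by
    simp only [hnews, Finset.sum_range_succ]
    rw [h'0, h'1]; simpa using eq2i
  have new23 : news (2 * i + 3) = olds (2 * i) + 2 ^ (i + 1) := by
    have : 2 * i + 3 = (2 * i + 2) + 1 := by ring
    rw [this]
    simp only [hnews, Finset.sum_range_succ]
    rw [h'2]
    have : (2 * i + 2) / 2 = i + 1 := by omega
    simp only [this, Option.isSome_some, if_true]
    have := new22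
    simp only [hnews, Finset.sum_range_succ] at this ⊢
    omega
  have old21 : olds (2 * i + 1) = olds (2 * i) + 2 ^ i := by
    simp only [holds, Finset.sum_range_succ]
    rw [h0]
    have : (2 * i) / 2 = i := by omega
    simp [this]
  have old22 : olds (2 * i + 2) = olds (2 * i) + 2 ^ i + 2 ^ i := by
    simp only [holds, Finset.sum_range_succ]
    rw [h0, h1]
    have e1 : (2 * i) / 2 = i := by omega
    have e2 : (2 * i + 1) / 2 = i := by omega
    simp [e1, e2]
  have old23 : olds (2 * i + 3) = olds (2 * i) + 2 ^ i + 2 ^ i := by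
    have h3 : 2 * i + 3 = (2 * i + 2) + 1 := by ring
    rw [h3]
    simp only [holds, Finset.sum_range_succ]
    rw [h2]
    have := old22
    simp only [holds, Finset.sum_range_succ] at this ⊢
    simp only [Option.isSome_none, Bool.false_eq_true, if_false, add_zero]
    omega
  have pow_eq : 2 ^ (i + 1) = 2 ^ i + 2 ^ i := by ring
  -- the main comparison lemma
  have main : ∀ k, news k ≤ olds k := by
    intro k
    rcases lt_or_ge k (2 * i + 1) with hk | hk
    · rcases lt_or_ge k (2 * i) with hk' | hk'
      · refine le_of_eq (Finset.sum_congr rfl fun j hj => ?_)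
        rw [hsame j (by simp at hj; omega) (by simp at hj; omega) (by simp at hj; omega)]
      · have : k = 2 * i := by omega
        rw [this, eq2i]
    · rcases lt_or_ge k (2 * i + 3) with hk' | hk'
      · have : k = 2 * i + 1 ∨ k = 2 * i + 2 := by omega
        rcases this with h | h <;> subst h
        · rw [new21, old21]; exact Nat.le_add_right _ _
        · rw [new22, old22]
          exact le_trans (Nat.le_add_right _ _) (Nat.le_add_right _ _)
      · -- k ≥ 2i+3 : split the sums at 2i+3
        have hsplit : ∀ (f : ℕ → ℕ), ∑ j ∈ Finset.range k, f j =
            (∑ j ∈ Finset.range (2 * i + 3), f j) + ∑ j ∈ Finset.Ico (2 * i + 3) k, f j := by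
          intro f
          simp only [Finset.range_eq_Ico]
          rw [← Finset.sum_Ico_consecutive _ (Nat.zero_le _) hk']
        simp only [hnews, holds]
        rw [hsplit, hsplit]
        have htail : ∑ j ∈ Finset.Ico (2 * i + 3) k, (if (H' j).isSome then 2 ^ (j / 2) else 0)
            = ∑ j ∈ Finset.Ico (2 * i + 3) k, (if (H j).isSome then 2 ^ (j / 2) else 0) := by
          refine Finset.sum_congr rfl fun j hj => ?_
          simp only [Finset.mem_Ico] at hj
          rw [hsame j (by omega) (by omega) (by omega)]
        rw [htail]
        have h1' := new23
        have h2' := old23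
        simp only [hnews, holds] at h1' h2'
        omega
  constructor
  · intro k B hB
    by_cases hk : k = 2 * i + 2
    · subst hk
      rw [h'2] at hB
      have hBe : B = B₁ ∪ B₂ := by injection hB with h; exact h.symm
      subst hBe
      have : (2 * i + 2) / 2 = i + 1 := by omega
      rw [this]
      calc (B₁ ∪ B₂).card ≤ B₁.card + B₂.card := Finset.card_union_le _ _
        _ ≤ 2 ^ i + 2 ^ i := by
            have e1 : (2 * i) / 2 = i := by omega
            have e2 : (2 * i + 1) / 2 = i := by omega
            have := hsize (2 * i) B₁ h0
            have := hsize (2 * i + 1) B₂ h1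
            rw [e1] at *; rw [e2] at *; omega
        _ = 2 ^ (i + 1) := pow_eq.symm
    · by_cases hk' : k = 2 * i ∨ k = 2 * i + 1
      · exfalso
        rcases hk' with h | h <;> subst h
        · rw [h'0] at hB; exact nomatch hB
        · rw [h'1] at hB; exact nomatch hB
      · rw [hsame k (by tauto) (by tauto) hk] at hB
        exact hsize k B hB
  · intro k B x hB hx
    by_cases hk : k = 2 * i + 2
    · subst hk
      rw [h'2] at hB
      have hBe : B = B₁ ∪ B₂ := by injection hB with h; exact h.symm
      subst hBe
      have key : news (2 * i + 2) ≤ Γ x := by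
        rw [new22]
        rcases Finset.mem_union.mp hx with hx1 | hx2
        · exact hage (2 * i) B₁ x h0 hx1
        · calc olds (2 * i) ≤ olds (2 * i + 1) := by rw [old21]; exact Nat.le_add_right _ _
            _ ≤ Γ x := hage (2 * i + 1) B₂ x h1 hx2
      simpa [hnews] using key
    · by_cases hk' : k = 2 * i ∨ k = 2 * i + 1
      · exfalso
        rcases hk' with h | h <;> subst h
        · rw [h'0] at hB; exact nomatch hB
        · rw [h'1] at hB; exact nomatch hB
      · rw [hsame k (by tauto) (by tauto) hk] at hB
        calc (∑ j ∈ Finset.range k, if (H' j).isSome then 2 ^ (j / 2) else 0) ≤ olds k :=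
              main k
          _ ≤ Γ x := hage k B x hB hx
end

section
/- Consider a counter over bucket positions where each non-vacant position i carries potential c·i² for a constant c > 0, and a Push operation that makes position 0 vacant by a cascade: repeatedly either moving a bucket from position 2i to vacant position 2i+1, or melding positions 2i and 2i+1 into position 2i+2, where a cascade reaching maximum index ℓ costs at most c'·ℓ² actual work. Then over any sequence of n Push operations starting from the all-vacant state, the total actual work is O(n). -/
/-- `Cascade i S S' ℓ` : starting from the set `S` of non-vacant positions, the
procedure ensuring that position `2i` is vacant transforms `S` into `S'`, reaching
maximum index `ℓ`. It either does nothing (position `2i` already vacant), moves the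
bucket from position `2i` to the vacant position `2i+1`, or recursively ensures
position `2i+2` is vacant and melds positions `2i` and `2i+1` into `2i+2`. -/
inductive Cascade : ℕ → Finset ℕ → Finset ℕ → ℕ → Prop
  | done (i : ℕ) (S : Finset ℕ) (h : 2 * i ∉ S) : Cascade i S S (2 * i)
  | move (i : ℕ) (S : Finset ℕ) (h : 2 * i ∈ S) (h' : 2 * i + 1 ∉ S) :
      Cascade i S (insert (2 * i + 1) (S.erase (2 * i))) (2 * i + 1)
  | meld (i : ℕ) (S S' : Finset ℕ) (ℓ : ℕ) (h : 2 * i ∈ S) (h' : 2 * i + 1 ∈ S)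
      (hc : Cascade (i + 1) S S' ℓ) :
      Cascade i S (insert (2 * i + 2) ((S'.erase (2 * i)).erase (2 * i + 1))) ℓ

/-- A Push operation: make position `0` vacant by a cascade, then occupy position
`0` with the new singleton bucket. -/
def PushStep (S S' : Finset ℕ) (ℓ : ℕ) : Prop :=
  ∃ S'', Cascade 0 S S'' ℓ ∧ S' = insert 0 S''

namespace PushAux

/-- Potential function. -/
def Φ (c : ℕ) (S : Finset ℕ) : ℕ := ∑ i ∈ S, c * i ^ 2

/-- Amortization weight function. -/
def g (c c' : ℕ) (i : ℕ) : ℕ :=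
  (c + c') * (2 * i + 1) ^ 2 +
    (8 * (c + c') - i) * ((c + c') * (8 * (8 * (c + c')) + 8) + c * (8 * (8 * (c + c')) + 4))

lemma cascade_notMem {i : ℕ} {S S' : Finset ℕ} {ℓ : ℕ} (h : Cascade i S S' ℓ) :
    2 * i ∉ S' := by
  induction h with
  | done i S h => exact h
  | move i S h h' =>
      simp [Finset.mem_insert, Finset.mem_erase]
  | meld i S S' ℓ h h' hc ih =>
      simp only [Finset.mem_insert, Finset.mem_erase]
      push_neg
      exact ⟨by omega, fun _ h2 => absurd rfl h2⟩
  
lemma cascade_lt_mem {i : ℕ} {S S' : Finset ℕ} {ℓ : ℕ} (h : Cascade i S S' ℓ) :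
    ∀ j < 2 * i, (j ∈ S' ↔ j ∈ S) := by
  induction h with
  | done i S h => intro j _; rfl
  | move i S h h' =>
      intro j hj
      simp only [Finset.mem_insert, Finset.mem_erase]
      constructor
      · rintro (rfl | ⟨_, hj⟩); · omega
        exact hj
      · intro hj'; right; exact ⟨by omega, hj'⟩
  | meld i S S' ℓ h h' hc ih =>
      intro j hj
      have := ih j (by omega)
      simp only [Finset.mem_insert, Finset.mem_erase]
      constructor
      · rintro (rfl | ⟨_, _, hj'⟩); · omega
        exact this.mp hj'
      · intro hj'
        right
        exact ⟨by omega, by omega, this.mpr hj'⟩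

lemma g_meld (c c' : ℕ) (hc : 0 < c) (i : ℕ) :
    g c c' (i + 1) + c * (2 * i + 2) ^ 2 ≤ g c c' i + c * (2 * i) ^ 2 + c * (2 * i + 1) ^ 2 := by
  unfold g
  set B := (c + c') * (8 * (8 * (c + c')) + 8) + c * (8 * (8 * (c + c')) + 4) with hB
  have e1 : (c + c') * (2 * (i + 1) + 1) ^ 2 =
      (c + c') * (2 * i + 1) ^ 2 + (c + c') * (8 * i + 8) := by ring
  have e2 : c * (2 * i + 2) ^ 2 = c * (2 * i) ^ 2 + c * (8 * i + 4) := by ring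
  rcases lt_or_ge i (8 * (c + c')) with hi | hi
  · have h1 : 8 * (c + c') - i = (8 * (c + c') - (i + 1)) + 1 := by omega
    rw [h1]
    have hDB : ((8 * (c + c') - (i + 1)) + 1) * B = (8 * (c + c') - (i + 1)) * B + B := by ring
    have b1 : (c + c') * (8 * i + 8) ≤ (c + c') * (8 * (8 * (c + c')) + 8) :=
      Nat.mul_le_mul_left _ (by omega)
    have b2 : c * (8 * i + 4) ≤ c * (8 * (8 * (c + c')) + 4) :=
      Nat.mul_le_mul_left _ (by omega)
    omega
  · have h1 : 8 * (c + c') - i = 0 := by omega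
    have h2 : 8 * (c + c') - (i + 1) = 0 := by omega
    rw [h1, h2]
    have key : (c + c') * (8 * i + 8) + c * (8 * i + 4) ≤ c * (2 * i + 1) ^ 2 := by
      have hi8 : 8 ≤ i := by omega
      have b1 : (c + c') * (8 * i + 8) ≤ (c + c') * (9 * i) :=
        Nat.mul_le_mul_left _ (by omega)
      have b2 : c * (8 * i + 4) ≤ c * (9 * i) := Nat.mul_le_mul_left _ (by omega)
      have b3 : ((c + c') + c) * (9 * i) ≤ (2 * (c + c')) * (9 * i) :=
        Nat.mul_le_mul_right _ (by omega)
      have b4 : (2 * (c + c')) * (9 * i) ≤ c * (4 * i * i) := by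
        have s1 : 18 * (c + c') ≤ (32 * c) * (c + c') :=
          Nat.mul_le_mul_right _ (by omega)
        have s2 : 18 * (c + c') * i ≤ 4 * c * (8 * (c + c')) * i := by
          calc 18 * (c + c') * i ≤ (32 * c) * (c + c') * i := Nat.mul_le_mul_right _ s1
          _ = 4 * c * (8 * (c + c')) * i := by ring
        have s3 : 4 * c * (8 * (c + c')) * i ≤ 4 * c * i * i :=
          Nat.mul_le_mul_right _ (Nat.mul_le_mul_left _ hi)
        calc (2 * (c + c')) * (9 * i) = 18 * (c + c') * i := by ring
        _ ≤ 4 * c * (8 * (c + c')) * i := s2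
        _ ≤ 4 * c * i * i := s3
        _ = c * (4 * i * i) := by ring
      have b5 : c * (4 * i * i) ≤ c * (2 * i + 1) ^ 2 := by
        apply Nat.mul_le_mul_left
        have : (2 * i + 1) ^ 2 = 4 * i * i + 4 * i + 1 := by ring
        omega
      have b6 : (c + c') * (9 * i) + c * (9 * i) = ((c + c') + c) * (9 * i) := by ring
      omega
    omega

lemma cascade_potential (c c' : ℕ) (hc : 0 < c) {i : ℕ} {S S' : Finset ℕ} {ℓ : ℕ}
    (h : Cascade i S S' ℓ) : Φ c S' + c' * ℓ ^ 2 ≤ Φ c S + g c c' i := by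
  induction h with
  | done i S h =>
      have : c' * (2 * i) ^ 2 ≤ g c c' i := by
        unfold g
        have : c' * (2 * i) ^ 2 ≤ (c + c') * (2 * i + 1) ^ 2 :=
          Nat.mul_le_mul (by omega) (Nat.pow_le_pow_left (by omega) 2)
        omega
      omega
  | move i S h h' =>
      have hni : 2 * i + 1 ∉ S.erase (2 * i) := fun hx => h' (Finset.mem_of_mem_erase hx)
      have e1 : Φ c (insert (2 * i + 1) (S.erase (2 * i))) =
          c * (2 * i + 1) ^ 2 + Φ c (S.erase (2 * i)) := Finset.sum_insert hni
      have e2 : c * (2 * i) ^ 2 + Φ c (S.erase (2 * i)) = Φ c S := by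
        unfold Φ; exact Finset.add_sum_erase _ (fun j => c * j ^ 2) h
      have hg : c * (2 * i + 1) ^ 2 + c' * (2 * i + 1) ^ 2 ≤ g c c' i + c * (2 * i) ^ 2 := by
        unfold g
        have : c * (2 * i + 1) ^ 2 + c' * (2 * i + 1) ^ 2 = (c + c') * (2 * i + 1) ^ 2 := by ring
        omega
      omega
  | meld i S S' ℓ h h' hcas ih =>
      have h2i : 2 * i ∈ S' := (cascade_lt_mem hcas (2 * i) (by omega)).mpr h
      have h2i1 : 2 * i + 1 ∈ S' := (cascade_lt_mem hcas (2 * i + 1) (by omega)).mpr h'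
      have h2i2 : 2 * i + 2 ∉ S' := by
        have := cascade_notMem hcas; simpa [Nat.mul_add] using this
      have hni : 2 * i + 2 ∉ (S'.erase (2 * i)).erase (2 * i + 1) :=
        fun hx => h2i2 (Finset.mem_of_mem_erase (Finset.mem_of_mem_erase hx))
      have e1 : Φ c (insert (2 * i + 2) ((S'.erase (2 * i)).erase (2 * i + 1))) =
          c * (2 * i + 2) ^ 2 + Φ c ((S'.erase (2 * i)).erase (2 * i + 1)) :=
        Finset.sum_insert hni
      have h2i1' : 2 * i + 1 ∈ S'.erase (2 * i) := Finset.mem_erase.mpr ⟨by omega, h2i1⟩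
      have e2 : c * (2 * i + 1) ^ 2 + Φ c ((S'.erase (2 * i)).erase (2 * i + 1)) =
          Φ c (S'.erase (2 * i)) := by
        unfold Φ; exact Finset.add_sum_erase _ (fun j => c * j ^ 2) h2i1'
      have e3 : c * (2 * i) ^ 2 + Φ c (S'.erase (2 * i)) = Φ c S' := by
        unfold Φ; exact Finset.add_sum_erase _ (fun j => c * j ^ 2) h2i
      have hg := g_meld c c' hc i
      omega

lemma push_potential (c c' : ℕ) (hc : 0 < c) {S S' : Finset ℕ} {ℓ : ℕ}
    (h : PushStep S S' ℓ) : Φ c S' + c' * ℓ ^ 2 ≤ Φ c S + g c c' 0 := by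
  obtain ⟨S'', hcas, rfl⟩ := h
  have h1 : Φ c (insert 0 S'') ≤ Φ c S'' := by
    by_cases h0 : 0 ∈ S''
    · rw [Finset.insert_eq_self.mpr h0]
    · unfold Φ; rw [Finset.sum_insert h0]; simp
  have h2 := cascade_potential c c' hc hcas
  omega

end PushAux

/-- Amortized analysis of Push (each non-vacant position `i` carries potential
`c·i²`): if each Push whose cascade reaches maximum index `ℓ` has actual cost at
most `c'·ℓ²`, then over any sequence of `n` Pushes starting from the all-vacant
state, the total actual work is `O(n)`. -/
theorem push_amortized_linear (c c' : ℕ) (hc : 0 < c) (hc' : 0 < c') :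
    ∃ C : ℕ, ∀ (n : ℕ) (S : ℕ → Finset ℕ) (a ℓ : ℕ → ℕ),
      S 0 = ∅ →
      (∀ t < n, PushStep (S t) (S (t + 1)) (ℓ t)) →
      (∀ t < n, a t ≤ c' * ℓ t ^ 2) →
      ∑ t ∈ Finset.range n, a t ≤ C * n := by
  refine ⟨PushAux.g c c' 0, fun n S a ℓ hS0 hpush ha => ?_⟩
  have key : ∀ m ≤ n, ∑ t ∈ Finset.range m, a t + PushAux.Φ c (S m) ≤ PushAux.g c c' 0 * m := by
    intro m hm
    induction m with
    | zero => simp [hS0, PushAux.Φ]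
    | succ k ih =>
        have hk := ih (by omega)
        have hstep := PushAux.push_potential c c' hc (hpush k (by omega))
        have hak := ha k (by omega)
        rw [Finset.sum_range_succ]
        have : PushAux.g c c' 0 * (k + 1) = PushAux.g c c' 0 * k + PushAux.g c c' 0 := by ring
        omega
  have := key n le_rfl
  omega
end
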